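/- For each n ≥ 1, the CTL formula φ over {AG, AX} implementing an n-bit binary counter (with carry, reset, and store auxiliary propositions) has length O(n), is satisfiable, and every serial model of φ has extent at least 2ⁿ − 1, i.e., contains a simple path through at least 2ⁿ distinct worlds. -/

import Mathlib

def Serial {W : Type} (R : W → W → Prop) : Prop := ∀ w, ∃ u, R w u

def IsPath {W : Type} (R : W → W → Prop) (π : ℕ → W) : Prop := ∀ i, R (π i) (π (i+1))

structure Kripke (W : Type) where
  R : W → W → Prop
  V : ℕ → W → Prop

inductive CTL where
  | atom : ℕ → CTL
  | neg  : CTL → CTL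
  | and  : CTL → CTL → CTL
  | or   : CTL → CTL → CTL
  | AX : CTL → CTL
  | EX : CTL → CTL
  | AF : CTL → CTL
  | EF : CTL → CTL
  | AG : CTL → CTL
  | EG : CTL → CTL
  | AU : CTL → CTL → CTL
  | EU : CTL → CTL → CTL
  | AR : CTL → CTL → CTL
  | ER : CTL → CTL → CTL
deriving DecidableEq

def sat {W : Type} (K : Kripke W) : CTL → W → Prop
  | .atom p, w => K.V p w
  | .neg φ, w => ¬ sat K φ w
  | .and φ ψ, w => sat K φ w ∧ sat K ψ w
  | .or φ ψ, w => sat K φ w ∨ sat K ψ w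
  | .AX φ, w => ∀ π : ℕ → W, IsPath K.R π → π 0 = w → sat K φ (π 1)
  | .EX φ, w => ∃ π : ℕ → W, IsPath K.R π ∧ π 0 = w ∧ sat K φ (π 1)
  | .AF φ, w => ∀ π : ℕ → W, IsPath K.R π → π 0 = w → ∃ i, sat K φ (π i)
  | .EF φ, w => ∃ π : ℕ → W, IsPath K.R π ∧ π 0 = w ∧ ∃ i, sat K φ (π i)
  | .AG φ, w => ∀ π : ℕ → W, IsPath K.R π → π 0 = w → ∀ i, sat K φ (π i)
  | .EG φ, w => ∃ π : ℕ → W, IsPath K.R π ∧ π 0 = w ∧ ∀ i, sat K φ (π i)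
  | .AU φ ψ, w => ∀ π : ℕ → W, IsPath K.R π → π 0 = w →
      ∃ i, sat K ψ (π i) ∧ ∀ j, j < i → sat K φ (π j)
  | .EU φ ψ, w => ∃ π : ℕ → W, IsPath K.R π ∧ π 0 = w ∧
      ∃ i, sat K ψ (π i) ∧ ∀ j, j < i → sat K φ (π j)
  | .AR φ ψ, w => ∀ π : ℕ → W, IsPath K.R π → π 0 = w →
      ∀ i, sat K ψ (π i) ∨ ∃ j, j < i ∧ sat K φ (π j)
  | .ER φ ψ, w => ∃ π : ℕ → W, IsPath K.R π ∧ π 0 = w ∧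
      ∀ i, sat K ψ (π i) ∨ ∃ j, j < i ∧ sat K φ (π j)

def CTL.len : CTL → ℕ
  | .atom _ => 1
  | .neg φ => φ.len + 1
  | .and φ ψ => φ.len + ψ.len + 1
  | .or φ ψ => φ.len + ψ.len + 1
  | .AX φ => φ.len + 1
  | .EX φ => φ.len + 1
  | .AF φ => φ.len + 1
  | .EF φ => φ.len + 1
  | .AG φ => φ.len + 1
  | .EG φ => φ.len + 1
  | .AU φ ψ => φ.len + ψ.len + 1
  | .EU φ ψ => φ.len + ψ.len + 1
  | .AR φ ψ => φ.len + ψ.len + 1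
  | .ER φ ψ => φ.len + ψ.len + 1

def CTL.td : CTL → ℕ
  | .atom _ => 0
  | .neg φ => φ.td
  | .and φ ψ => max φ.td ψ.td
  | .or φ ψ => max φ.td ψ.td
  | .AX φ => φ.td + 1
  | .EX φ => φ.td + 1
  | .AF φ => φ.td + 1
  | .EF φ => φ.td + 1
  | .AG φ => φ.td + 1
  | .EG φ => φ.td + 1
  | .AU φ ψ => max φ.td ψ.td + 1
  | .EU φ ψ => max φ.td ψ.td + 1
  | .AR φ ψ => max φ.td ψ.td + 1
  | .ER φ ψ => max φ.td ψ.td + 1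

/-- The formula uses only the temporal operators `AG` and `AX` (and their duals
`EF` and `EX`). -/
def OnlyAGAX : CTL → Prop
  | .atom _ => True
  | .neg φ => OnlyAGAX φ
  | .and φ ψ => OnlyAGAX φ ∧ OnlyAGAX ψ
  | .or φ ψ => OnlyAGAX φ ∧ OnlyAGAX ψ
  | .AX φ => OnlyAGAX φ
  | .EX φ => OnlyAGAX φ
  | .AG φ => OnlyAGAX φ
  | .EF φ => OnlyAGAX φ
  | _ => False

/- ==== auxiliary development ==== -/

lemma lemB (k i : ℕ) :
    k % 2^(i+1) = 2^(i+1) - 1 ↔ (k % 2^i = 2^i - 1 ∧ Nat.testBit k i = true) := by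
  have hP : 0 < 2^i := Nat.two_pow_pos i
  have hm : k % 2^(i+1) = k % 2^i + 2^i * (k / 2^i % 2) := Nat.mod_pow_succ
  have hr : k % 2^i < 2^i := Nat.mod_lt _ hP
  have ht : Nat.testBit k i = decide (k / 2^i % 2 = 1) := Nat.testBit_eq_decide_div_mod_eq
  have h2 : k / 2^i % 2 < 2 := Nat.mod_lt _ (by norm_num)
  rw [ht, decide_eq_true_eq]
  have hpow : 2^(i+1) = 2 * 2^i := by ring
  rcases (by omega : k / 2^i % 2 = 0 ∨ k / 2^i % 2 = 1) with h | h <;> rw [h] at hm ⊢ <;> omega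

lemma lemA (w i : ℕ) :
    Nat.testBit (w+1) i = true ↔ (Nat.testBit w i = true ↔ ¬ (w % 2^i = 2^i - 1)) := by
  induction i generalizing w with
  | zero =>
    simp only [Nat.testBit_zero, decide_eq_true_eq, pow_zero]
    omega
  | succ i ih =>
    rcases Nat.even_or_odd w with ⟨m, rfl⟩ | ⟨m, rfl⟩
    · have h1 : (m + m + 1) / 2 = m := by omega
      have h2 : (m + m) / 2 = m := by omega
      rw [Nat.testBit_succ, Nat.testBit_succ, h1, h2]
      have hP : 0 < 2^i := Nat.two_pow_pos i
      have hpow : 2^(i+1) = 2 * 2^i := by ring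
      have hodd : ¬ ((m + m) % 2^(i+1) = 2^(i+1) - 1) := by
        have : (m + m) % 2^(i+1) % 2 = 0 := by
          rw [Nat.mod_mod_of_dvd _ ⟨2^i, hpow⟩]; omega
        omega
      tauto
    · have h1 : (2*m + 1 + 1) / 2 = m + 1 := by omega
      have h2 : (2*m + 1) / 2 = m := by omega
      rw [Nat.testBit_succ, Nat.testBit_succ, h1, h2]
      have hP : 0 < 2^i := Nat.two_pow_pos i
      have hpow : 2^(i+1) = 2 * 2^i := by ring
      have hr : m % 2^i < 2^i := Nat.mod_lt _ hP
      have hmod : (2*m + 1) % 2^(i+1) = 2 * (m % 2^i) + 1 := by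
        rw [hpow, Nat.add_mod, Nat.mul_mod_mul_left]
        have : 1 % (2 * 2^i) = 1 := Nat.mod_eq_of_lt (by omega)
        rw [this, Nat.mod_eq_of_lt (by omega)]
      have heq : (2*m + 1) % 2^(i+1) = 2^(i+1) - 1 ↔ m % 2^i = 2^i - 1 := by omega
      rw [ih m, heq]

lemma lemC (k i : ℕ) :
    (∀ j, j < i → Nat.testBit k j = true) ↔ k % 2^i = 2^i - 1 := by
  induction i with
  | zero => simp [Nat.mod_one]
  | succ i ih =>
    rw [lemB]
    constructor
    · intro h; exact ⟨ih.mp (fun j hj => h j (by omega)), h i (by omega)⟩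
    · rintro ⟨h1, h2⟩ j hj
      rcases Nat.lt_succ_iff_lt_or_eq.mp hj with h | rfl
      · exact ih.mpr h1 j h
      · exact h2

/- ==== formula constructions ==== -/

def impF (a b : CTL) : CTL := .or (.neg a) b
def iffF (a b : CTL) : CTL := .and (impF a b) (impF b a)
def ttF : CTL := .or (.atom 0) (.neg (.atom 0))

def bigAnd : List CTL → CTL
  | [] => ttF
  | f :: l => .and f (bigAnd l)

def stepF (n i : ℕ) : CTL :=
  .and (impF (.and (.atom i) (.atom (n+i))) (.AX (.neg (.atom i))))
  (.and (impF (.and (.neg (.atom i)) (.atom (n+i))) (.AX (.atom i)))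
  (.and (impF (.and (.atom i) (.neg (.atom (n+i)))) (.AX (.atom i)))
        (impF (.and (.neg (.atom i)) (.neg (.atom (n+i)))) (.AX (.neg (.atom i))))))

def carryF (n i : ℕ) : CTL := iffF (.atom (n+(i+1))) (.and (.atom (n+i)) (.atom i))

def axiomList (n : ℕ) : List CTL :=
  CTL.atom n :: ((List.range (n-1)).map (carryF n) ++ (List.range n).map (stepF n))

def phiF (n : ℕ) : CTL :=
  .and (.AG (bigAnd (axiomList n))) (bigAnd ((List.range n).map (fun i => .neg (.atom i))))

/- ==== generic lemmas about bigAnd ==== -/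

lemma sat_bigAnd {W : Type} (K : Kripke W) (l : List CTL) (w : W) :
    sat K (bigAnd l) w ↔ ∀ f ∈ l, sat K f w := by
  induction l with
  | nil =>
    simp only [bigAnd, ttF, sat, List.not_mem_nil, false_implies, implies_true, iff_true]
    exact Classical.em _
  | cons f l ih =>
    simp only [bigAnd, sat, ih, List.mem_cons]
    constructor
    · rintro ⟨h1, h2⟩ g (rfl | hg); exact h1; exact h2 g hg
    · intro h; exact ⟨h f (Or.inl rfl), fun g hg => h g (Or.inr hg)⟩

lemma onlyAGAX_bigAnd (l : List CTL) (h : ∀ f ∈ l, OnlyAGAX f) : OnlyAGAX (bigAnd l) := by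
  induction l with
  | nil => exact ⟨trivial, trivial⟩
  | cons f l ih =>
    exact ⟨h f (List.mem_cons_self), ih (fun g hg => h g (List.mem_cons_of_mem _ hg))⟩

lemma len_bigAnd (l : List CTL) (c : ℕ) (h : ∀ f ∈ l, f.len ≤ c) :
    (bigAnd l).len ≤ (c+1) * l.length + 4 := by
  induction l with
  | nil => simp [bigAnd, ttF, CTL.len]
  | cons f l ih =>
    have h1 := h f (List.mem_cons_self)
    have h2 := ih (fun g hg => h g (List.mem_cons_of_mem _ hg))
    simp only [bigAnd, CTL.len, List.length_cons]
    have : (c+1) * (l.length + 1) = (c+1) * l.length + (c+1) := by ring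
    omega

/- ==== properties of phiF ==== -/

lemma onlyAGAX_phiF (n : ℕ) : OnlyAGAX (phiF n) := by
  have h1 : OnlyAGAX (bigAnd (axiomList n)) := by
    apply onlyAGAX_bigAnd
    intro f hf
    simp only [axiomList, List.mem_cons, List.mem_append, List.mem_map] at hf
    rcases hf with rfl | ⟨i, _, rfl⟩ | ⟨i, _, rfl⟩
    · trivial
    · simp [carryF, iffF, impF, OnlyAGAX]
    · simp [stepF, impF, OnlyAGAX]
  have h2 : OnlyAGAX (bigAnd ((List.range n).map (fun i => CTL.neg (.atom i)))) := by
    apply onlyAGAX_bigAnd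
    intro f hf
    simp only [List.mem_map, List.mem_range] at hf
    obtain ⟨i, _, rfl⟩ := hf
    trivial
  exact ⟨h1, h2⟩

lemma len_phiF (n : ℕ) (hn : 1 ≤ n) : (phiF n).len ≤ 93 * n := by
  have h1 : (bigAnd (axiomList n)).len ≤ 40 * (axiomList n).length + 4 := by
    apply len_bigAnd
    intro f hf
    simp only [axiomList, List.mem_cons, List.mem_append, List.mem_map] at hf
    rcases hf with rfl | ⟨i, _, rfl⟩ | ⟨i, _, rfl⟩
    · norm_num [CTL.len]
    · norm_num [carryF, iffF, impF, CTL.len]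
    · norm_num [stepF, impF, CTL.len]
  have hlen1 : (axiomList n).length = n - 1 + n + 1 := by
    simp [axiomList]
  have h2 : (bigAnd ((List.range n).map (fun i => CTL.neg (.atom i)))).len
      ≤ 3 * ((List.range n).map (fun i => CTL.neg (.atom i))).length + 4 := by
    apply len_bigAnd
    intro f hf
    simp only [List.mem_map, List.mem_range] at hf
    obtain ⟨i, _, rfl⟩ := hf
    norm_num [CTL.len]
  have hlen2 : ((List.range n).map (fun i => CTL.neg (.atom i))).length = n := by simp
  have hphi : (phiF n).len =
      ((bigAnd (axiomList n)).len + 1) +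
        (bigAnd ((List.range n).map (fun i => CTL.neg (.atom i)))).len + 1 := rfl
  omega

/- ==== the concrete counter model ==== -/

def Kmodel (n : ℕ) : Kripke ℕ where
  R w u := u = w + 1
  V i w := if i < n then Nat.testBit w i = true else w % 2^(i-n) = 2^(i-n) - 1

lemma Kmodel_V_lt (n i w : ℕ) (hi : i < n) :
    (Kmodel n).V i w ↔ Nat.testBit w i = true := by
  simp [Kmodel, hi]

lemma Kmodel_V_ge (n i w : ℕ) :
    (Kmodel n).V (n+i) w ↔ w % 2^i = 2^i - 1 := by
  have h1 : ¬ (n + i < n) := by omega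
  simp [Kmodel, h1, Nat.add_sub_cancel_left]

lemma sat_axioms_model (n : ℕ) (k : ℕ) : ∀ f ∈ axiomList n, sat (Kmodel n) f k := by
  have hAX : ∀ (ψ : CTL), sat (Kmodel n) ψ (k+1) → sat (Kmodel n) (.AX ψ) k := by
    intro ψ h π hπ h0
    have h1 : π 1 = π 0 + 1 := hπ 0
    rw [h0] at h1
    rw [h1]
    exact h
  intro f hf
  simp only [axiomList, List.mem_cons, List.mem_append, List.mem_map, List.mem_range] at hf
  rcases hf with rfl | ⟨i, hi, rfl⟩ | ⟨i, hi, rfl⟩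
  · show (Kmodel n).V n k
    have := (Kmodel_V_ge n 0 k)
    simp only [Nat.add_zero, pow_zero, Nat.mod_one] at this
    exact this.mpr rfl
  · have hin : i < n := by omega
    have e1 := Kmodel_V_ge n (i+1) k
    have e2 := Kmodel_V_ge n i k
    have e3 := Kmodel_V_lt n i k hin
    have hb := lemB k i
    simp only [carryF, iffF, impF, sat]
    tauto
  · have e1 := Kmodel_V_lt n i (k+1) hi
    have e2 := Kmodel_V_lt n i k hi
    have e3 := Kmodel_V_ge n i k
    have key : (Kmodel n).V i (k+1) ↔ ((Kmodel n).V i k ↔ ¬ (Kmodel n).V (n+i) k) := by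
      rw [e1, e2, e3]; exact lemA k i
    refine ⟨?_, ?_, ?_, ?_⟩
    · rcases Classical.em ((Kmodel n).V i k ∧ (Kmodel n).V (n+i) k) with hc | hc
      · exact Or.inr (hAX _ (show ¬ (Kmodel n).V i (k+1) by tauto))
      · exact Or.inl hc
    · rcases Classical.em ((¬ (Kmodel n).V i k) ∧ (Kmodel n).V (n+i) k) with hc | hc
      · exact Or.inr (hAX _ (show (Kmodel n).V i (k+1) by tauto))
      · exact Or.inl hc
    · rcases Classical.em ((Kmodel n).V i k ∧ ¬ (Kmodel n).V (n+i) k) with hc | hc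
      · exact Or.inr (hAX _ (show (Kmodel n).V i (k+1) by tauto))
      · exact Or.inl hc
    · rcases Classical.em ((¬ (Kmodel n).V i k) ∧ ¬ (Kmodel n).V (n+i) k) with hc | hc
      · exact Or.inr (hAX _ (show ¬ (Kmodel n).V i (k+1) by tauto))
      · exact Or.inl hc

lemma sat_phiF_model (n : ℕ) : sat (Kmodel n) (phiF n) 0 := by
  refine ⟨?_, ?_⟩
  · intro π hπ h0 i
    rw [sat_bigAnd]
    exact fun f hf => sat_axioms_model n (π i) f hf
  · rw [sat_bigAnd]
    intro f hf
    simp only [List.mem_map, List.mem_range] at hf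
    obtain ⟨i, hi, rfl⟩ := hf
    show ¬ (Kmodel n).V i 0
    rw [Kmodel_V_lt n i 0 hi]
    simp [Nat.zero_testBit]

/- ==== lower bound: every serial model contains 2^n distinct worlds on a path ==== -/

lemma keylem (A B C : Prop) (f1 : A → B → ¬C) (f2 : ¬A → B → C)
    (f3 : A → ¬B → C) (f4 : ¬A → ¬B → ¬C) : C ↔ (A ↔ ¬B) := by tauto

lemma lower_bound (n : ℕ) {W : Type} (K : Kripke W) (w : W)
    (hser : Serial K.R) (hsat : sat K (phiF n) w) :
    ∃ π : ℕ → W, IsPath K.R π ∧ π 0 = w ∧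
      ∀ a b : ℕ, a < 2^n → b < 2^n → π a = π b → a = b := by
  classical
  choose g hg using hser
  set π : ℕ → W := fun k => g^[k] w with hπdef
  have hstep' : ∀ k, π (k+1) = g (π k) := fun k => Function.iterate_succ_apply' g k w
  have hπ : IsPath K.R π := fun k => by rw [hstep']; exact hg (π k)
  have h0 : π 0 = w := rfl
  obtain ⟨hAG, hneg⟩ := hsat
  have hax : ∀ k, ∀ f ∈ axiomList n, sat K f (π k) :=
    fun k => (sat_bigAnd K _ _).mp (hAG π hπ h0 k)
  have hq0 : ∀ k, K.V n (π k) := fun k => hax k _ (List.mem_cons_self)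
  have hcarry : ∀ k i, i < n - 1 →
      (K.V (n+(i+1)) (π k) ↔ (K.V (n+i) (π k) ∧ K.V i (π k))) := by
    intro k i hi
    have hm : carryF n i ∈ axiomList n := by
      simp only [axiomList, List.mem_cons, List.mem_append, List.mem_map, List.mem_range]
      exact Or.inr (Or.inl ⟨i, hi, rfl⟩)
    have h := hax k _ hm
    simp only [carryF, iffF, impF, sat] at h
    tauto
  have hAXk : ∀ k (ψ : CTL), sat K (.AX ψ) (π k) → sat K ψ (π (k+1)) := by
    intro k ψ h
    exact h (fun j => π (k+j)) (fun j => hπ (k+j)) rfl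
  have hstepk : ∀ k i, i < n →
      (K.V i (π (k+1)) ↔ (K.V i (π k) ↔ ¬ K.V (n+i) (π k))) := by
    intro k i hi
    have hm : stepF n i ∈ axiomList n := by
      simp only [axiomList, List.mem_cons, List.mem_append, List.mem_map, List.mem_range]
      exact Or.inr (Or.inr ⟨i, hi, rfl⟩)
    obtain ⟨h1, h2, h3, h4⟩ := hax k _ hm
    have f1 : K.V i (π k) → K.V (n+i) (π k) → ¬ K.V i (π (k+1)) := by
      intro hb hc
      rcases h1 with hl | hr
      · exact absurd ⟨hb, hc⟩ hl
      · exact hAXk k _ hr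
    have f2 : ¬ K.V i (π k) → K.V (n+i) (π k) → K.V i (π (k+1)) := by
      intro hb hc
      rcases h2 with hl | hr
      · exact absurd ⟨hb, hc⟩ hl
      · exact hAXk k _ hr
    have f3 : K.V i (π k) → ¬ K.V (n+i) (π k) → K.V i (π (k+1)) := by
      intro hb hc
      rcases h3 with hl | hr
      · exact absurd ⟨hb, hc⟩ hl
      · exact hAXk k _ hr
    have f4 : ¬ K.V i (π k) → ¬ K.V (n+i) (π k) → ¬ K.V i (π (k+1)) := by
      intro hb hc
      rcases h4 with hl | hr
      · exact absurd ⟨hb, hc⟩ hl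
      · exact hAXk k _ hr
    exact keylem _ _ _ f1 f2 f3 f4
  have hC : ∀ i, i < n → ∀ k, (K.V (n+i) (π k) ↔ ∀ j, j < i → K.V j (π k)) := by
    intro i
    induction i with
    | zero =>
      intro _ k
      exact ⟨fun _ j hj => absurd hj (by omega), fun _ => hq0 k⟩
    | succ i ih =>
      intro hi k
      rw [hcarry k i (by omega), ih (by omega) k]
      constructor
      · rintro ⟨ha, hb⟩ j hj
        rcases Nat.lt_succ_iff_lt_or_eq.mp hj with h | rfl
        · exact ha j h
        · exact hb
      · intro h
        exact ⟨fun j hj => h j (by omega), h i (by omega)⟩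
  have hneg0 : ∀ i, i < n → ¬ K.V i (π 0) := by
    intro i hi
    have := (sat_bigAnd K _ _).mp hneg (.neg (.atom i))
      (by simp only [List.mem_map, List.mem_range]; exact ⟨i, hi, rfl⟩)
    rw [h0]
    exact this
  have hbits : ∀ k, ∀ i, i < n → (K.V i (π k) ↔ Nat.testBit k i = true) := by
    intro k
    induction k with
    | zero =>
      intro i hi
      rw [Nat.zero_testBit]
      exact ⟨fun h => absurd h (hneg0 i hi), fun h => by simp at h⟩
    | succ k ih =>
      intro i hi
      have e2 : (∀ j, j < i → K.V j (π k)) ↔ (∀ j, j < i → Nat.testBit k j = true) := by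
        constructor
        · intro h j hj; exact (ih j (by omega)).mp (h j hj)
        · intro h j hj; exact (ih j (by omega)).mpr (h j hj)
      rw [hstepk k i hi, ih i hi, hC i hi k, e2, lemC k i]
      exact (lemA k i).symm
  refine ⟨π, hπ, h0, ?_⟩
  intro a b ha hb hab
  apply Nat.eq_of_testBit_eq
  intro i
  by_cases hi : i < n
  · have h1 := hbits a i hi
    have h2 := hbits b i hi
    rw [hab] at h1
    rw [Bool.eq_iff_iff]
    exact h1.symm.trans h2
  · have hle : 2^n ≤ 2^i := Nat.pow_le_pow_right (by norm_num) (by omega)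
    rw [Nat.testBit_eq_false_of_lt (by omega), Nat.testBit_eq_false_of_lt (by omega)]

/-- For each `n ≥ 1` there is a satisfiable CTL formula over `{AG, AX}` of length
`O(n)` (the `n`-bit binary-counter formula with carry, reset and store propositions)
such that every rooted serial model has extent at least `2ⁿ − 1`: some path from the
root visits at least `2ⁿ` distinct worlds. -/
theorem binary_counter_extent_lower_bound :
    ∃ C : ℕ, 0 < C ∧ ∀ n : ℕ, 1 ≤ n → ∃ φ : CTL,
      OnlyAGAX φ ∧ φ.len ≤ C * n ∧
      (∃ (W : Type) (K : Kripke W) (w : W), Serial K.R ∧ sat K φ w) ∧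
      (∀ (W : Type) (K : Kripke W) (w : W), Serial K.R → sat K φ w →
        ∃ π : ℕ → W, IsPath K.R π ∧ π 0 = w ∧
          ∃ f : Fin (2 ^ n) → ℕ, Function.Injective (fun i => π (f i))) := by
  refine ⟨93, by norm_num, ?_⟩
  intro n hn
  refine ⟨phiF n, onlyAGAX_phiF n, len_phiF n hn, ?_, ?_⟩
  · exact ⟨ℕ, Kmodel n, 0, fun w => ⟨w+1, rfl⟩, sat_phiF_model n⟩
  · intro W K w hser hsat
    obtain ⟨π, hπ, h0, hd⟩ := lower_bound n K w hser hsat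
    refine ⟨π, hπ, h0, fun i => i.val, ?_⟩
    intro a b hab
    exact Fin.ext (hd a.val b.val a.isLt b.isLt hab)
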